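/- Let y : [0,T) → ℝ be continuous on [0,T), differentiable on (0,T), and satisfy y(0) > 0 and y'(t) ≥ c·y(t)^{1/θ} for all t ∈ (0,T), where c > 0 and θ ∈ (0,1). Then for all t ∈ (0,T) with 1 − ((1−θ)/θ)·c·y(0)^{(1−θ)/θ}·t > 0, one has y(t) ≥ y(0)·(1 − ((1−θ)/θ)·c·y(0)^{(1−θ)/θ}·t)^{−θ/(1−θ)}. -/

import Mathlib

open Real ENNReal

open Set in

lemma aux_deriv (c θ a x : ℝ) (hθ0 : 0 < θ) (hθ1 : θ < 1) (ha : 0 < a)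
    (hx : 0 < 1 - (1 - θ) / θ * c * a ^ ((1 - θ) / θ) * x) :
    HasDerivAt (fun s => a * (1 - (1 - θ) / θ * c * a ^ ((1 - θ) / θ) * s) ^ (-θ / (1 - θ)))
      (c * (a * (1 - (1 - θ) / θ * c * a ^ ((1 - θ) / θ) * x) ^ (-θ / (1 - θ))) ^ (1 / θ)) x := by
  have h1θ : 0 < 1 - θ := by linarith
  set q : ℝ := (1 - θ) / θ with hqdef
  set p : ℝ := -θ / (1 - θ) with hpdef
  set K : ℝ := q * c * a ^ q with hKdef
  have hv : 0 < 1 - K * x := hx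
  have hlin : HasDerivAt (fun s : ℝ => 1 - K * s) (-K) x := by
    simpa using ((hasDerivAt_id x).const_mul K).const_sub 1
  have hrp : HasDerivAt (fun s : ℝ => (1 - K * s) ^ p) (-K * p * (1 - K * x) ^ (p - 1)) x :=
    hlin.rpow_const (Or.inl hv.ne')
  have hfull := hrp.const_mul a
  have heq : a * (-K * p * (1 - K * x) ^ (p - 1)) = c * (a * (1 - K * x) ^ p) ^ (1 / θ) := by
    have hqp : q * p = -1 := by rw [hqdef, hpdef]; field_simp
    have e1 : a ^ (1 / θ) = a * a ^ q := by
      have h : 1 / θ = 1 + q := by rw [hqdef]; field_simp; ring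
      rw [h, Real.rpow_add ha, Real.rpow_one]
    have e2 : p * (1 / θ) = p - 1 := by rw [hpdef]; field_simp; ring
    rw [Real.mul_rpow ha.le (Real.rpow_nonneg hv.le _), ← Real.rpow_mul hv.le, e2, e1, hKdef]
    linear_combination (-(a * c * a ^ q * (1 - K * x) ^ (p - 1))) * hqp
  rw [← heq]
  exact hfull

open Set in
lemma aux_main (c θ : ℝ) (hc : 0 < c) (hθ0 : 0 < θ) (hθ1 : θ < 1)
    (y : ℝ → ℝ) (t : ℝ) (ht : 0 < t)
    (hcont : ContinuousOn y (Set.Icc 0 t))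
    (hy0 : 0 < y 0)
    (hderiv : ∀ x, 0 < x → x ≤ t → ∃ y', HasDerivAt y y' x ∧ y' ≥ c * y x ^ (1 / θ))
    (η : ℝ) (hη : 0 < η) (hmono : ∀ z ∈ Set.Ioc 0 η, y 0 ≤ y z)
    (b d : ℝ) (hb0 : 0 < b) (hby : b < y 0) (hd0 : 0 < d) (hdc : d < c)
    (hKt : (1 - θ) / θ * d * b ^ ((1 - θ) / θ) * t < 1) :
    b * (1 - (1 - θ) / θ * d * b ^ ((1 - θ) / θ) * t) ^ (-θ / (1 - θ)) ≤ y t := by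
  have h1θ : 0 < 1 - θ := by linarith
  have hq : 0 < (1 - θ) / θ := div_pos h1θ hθ0
  have hK : 0 < (1 - θ) / θ * d * b ^ ((1 - θ) / θ) := by positivity
  set K := (1 - θ) / θ * d * b ^ ((1 - θ) / θ) with hKdef
  set p := -θ / (1 - θ) with hpdef
  have hvx : ∀ x ∈ Set.Icc (0:ℝ) t, 0 < 1 - K * x := by
    intro x hx
    have : K * x ≤ K * t := mul_le_mul_of_nonneg_left hx.2 hK.le
    linarith
  have hBd : ∀ x ∈ Set.Icc (0:ℝ) t,
      HasDerivAt (fun s => b * (1 - K * s) ^ p) (d * (b * (1 - K * x) ^ p) ^ (1 / θ)) x :=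
    fun x hx => aux_deriv d θ b x hθ0 hθ1 hb0 (hvx x hx)
  have hBpos : ∀ x ∈ Set.Icc (0:ℝ) t, 0 < b * (1 - K * x) ^ p :=
    fun x hx => mul_pos hb0 (Real.rpow_pos_of_pos (hvx x hx) _)
  have main : ∀ ⦃x⦄, x ∈ Set.Icc (0:ℝ) t → -y x ≤ -(b * (1 - K * x) ^ p) := by
    refine image_le_of_liminf_slope_right_lt_deriv_boundary' (f := fun s => -y s)
      (f' := fun x => if x = 0 then 0 else -(c * y x ^ (1 / θ)))
      (B := fun s => -(b * (1 - K * s) ^ p))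
      (B' := fun x => -(d * (b * (1 - K * x) ^ p) ^ (1 / θ)))
      hcont.neg ?_ ?_ ?_ ?_ ?_
    · -- hf'
      intro x hx r hr
      rcases eq_or_lt_of_le hx.1 with h0 | h0
      · have hx0 : x = 0 := h0.symm
        subst hx0
        norm_num at hr
        have hev : ∀ᶠ z in nhdsWithin (0:ℝ) (Set.Ioi 0), slope (fun s => -y s) 0 z < r := by
          filter_upwards [Ioc_mem_nhdsGT_of_mem (show (0:ℝ) ∈ Set.Ico 0 η from ⟨le_rfl, hη⟩)]
            with z hz
          have h1 : y 0 ≤ y z := hmono z hz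
          rw [slope_def_field]
          have : (-y z - -y 0) / (z - 0) ≤ 0 :=
            div_nonpos_of_nonpos_of_nonneg (by linarith) (by linarith [hz.1])
          linarith
        exact hev.frequently
      · obtain ⟨y', hdy, hge⟩ := hderiv x h0 hx.2.le
        have hfd : HasDerivAt (fun s => -y s) (-y') x := hdy.neg
        have hlt : -y' < r := by
          simp only [if_neg h0.ne'] at hr
          linarith [hge]
        have hev := ((hasDerivAt_iff_tendsto_slope.mp hfd).mono_left
          (nhdsWithin_mono x (show Set.Ioi x ⊆ {x}ᶜ from fun z hz => ne_of_gt hz))).eventually (Iio_mem_nhds hlt)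
        exact hev.frequently
    · -- ha : f 0 ≤ B 0
      simp only [mul_zero, sub_zero, Real.one_rpow, mul_one, neg_le_neg_iff]
      linarith
    · -- hB continuity
      exact fun x hx => ((hBd x hx).neg).continuousAt.continuousWithinAt
    · -- hB'
      exact fun x hx => ((hBd x (Ico_subset_Icc_self hx)).neg).hasDerivWithinAt
    · -- bound
      intro x hx heq
      rcases eq_or_lt_of_le hx.1 with h0 | h0
      · exfalso
        have hx0 : x = 0 := h0.symm
        subst hx0
        simp only [mul_zero, sub_zero, Real.one_rpow, mul_one, neg_inj] at heq
        linarith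
      · simp only [if_neg h0.ne']
        have hyx : y x = b * (1 - K * x) ^ p := neg_inj.mp heq
        rw [hyx]
        have hg := hBpos x (Ico_subset_Icc_self hx)
        have hgp := Real.rpow_pos_of_pos hg (1 / θ)
        nlinarith
  have hfin := main (Set.right_mem_Icc.mpr ht.le)
  linarith

open Set in
theorem stmt_2 (T : ℝ≥0∞) (hT : 0 < T) (c θ : ℝ) (hc : 0 < c) (hθ : θ ∈ Set.Ioo (0:ℝ) 1)
    (y : ℝ → ℝ)
    (hcont : ContinuousOn y {t : ℝ | 0 ≤ t ∧ ENNReal.ofReal t < T})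
    (hy0 : 0 < y 0)
    (hderiv : ∀ t : ℝ, 0 < t → ENNReal.ofReal t < T →
      ∃ y' : ℝ, HasDerivAt y y' t ∧ y' ≥ c * y t ^ (1 / θ)) :
    ∀ t : ℝ, 0 < t → ENNReal.ofReal t < T →
      1 - ((1 - θ) / θ) * c * y 0 ^ ((1 - θ) / θ) * t > 0 →
      y t ≥ y 0 * (1 - ((1 - θ) / θ) * c * y 0 ^ ((1 - θ) / θ) * t) ^ (-θ / (1 - θ)) := by
  intro t ht htT hKt
  obtain ⟨hθ0, hθ1⟩ := hθ
  have h1θ : 0 < 1 - θ := by linarith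
  have hq : 0 < (1 - θ) / θ := div_pos h1θ hθ0
  have hsub : Set.Icc (0:ℝ) t ⊆ {s : ℝ | 0 ≤ s ∧ ENNReal.ofReal s < T} :=
    fun s hs => ⟨hs.1, lt_of_le_of_lt (ENNReal.ofReal_le_ofReal hs.2) htT⟩
  have hct : ContinuousOn y (Set.Icc 0 t) := hcont.mono hsub
  have hderiv' : ∀ x, 0 < x → x ≤ t → ∃ y', HasDerivAt y y' x ∧ y' ≥ c * y x ^ (1 / θ) :=
    fun x hx hxt => hderiv x hx (lt_of_le_of_lt (ENNReal.ofReal_le_ofReal hxt) htT)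
  -- find η with y monotone-ish on (0, η]
  obtain ⟨η, hη0, hmono⟩ : ∃ η, 0 < η ∧ ∀ z ∈ Set.Ioc 0 η, y 0 ≤ y z := by
    have hcw : ContinuousWithinAt y (Set.Icc 0 t) 0 := hct 0 ⟨le_rfl, ht.le⟩
    have hev : {z : ℝ | 0 < y z} ∈ nhdsWithin (0:ℝ) (Set.Icc 0 t) :=
      hcw (Ioi_mem_nhds hy0)
    obtain ⟨ε, hε, hball⟩ := Metric.mem_nhdsWithin_iff.mp hev
    set η := min (ε / 2) t with hηdef
    have hη0 : 0 < η := lt_min (by linarith) ht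
    have hpos : ∀ z ∈ Set.Icc 0 η, 0 < y z := by
      intro z hz
      apply hball
      constructor
      · rw [Metric.mem_ball, Real.dist_eq, sub_zero, abs_of_nonneg hz.1]
        have h2 := hz.2
        have h3 := min_le_left (ε / 2) t
        linarith
      · exact ⟨hz.1, le_trans hz.2 (min_le_right _ _)⟩
    have hsm : StrictMonoOn y (Set.Icc 0 η) := by
      apply strictMonoOn_of_deriv_pos (convex_Icc _ _)
        (hct.mono (Set.Icc_subset_Icc_right (min_le_right _ _)))
      intro x hx
      rw [interior_Icc] at hx
      obtain ⟨y', hdy, hge⟩ := hderiv' x hx.1 (le_trans hx.2.le (min_le_right _ _))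
      rw [hdy.deriv]
      have h1 := hpos x ⟨hx.1.le, hx.2.le⟩
      have h2 := Real.rpow_pos_of_pos h1 (1 / θ)
      nlinarith
    exact ⟨η, hη0, fun z hz =>
      (hsm ⟨le_rfl, hη0.le⟩ ⟨hz.1.le, hz.2⟩ hz.1).le⟩
  -- the family of bounds
  have key : ∀ u ∈ Set.Ioo (0:ℝ) 1,
      y 0 * (1 - u) *
        (1 - (1 - θ) / θ * (c * (1 - u)) * (y 0 * (1 - u)) ^ ((1 - θ) / θ) * t) ^ (-θ / (1 - θ))
        ≤ y t := by
    intro u hu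
    obtain ⟨hu0, hu1⟩ := hu
    have hb0 : 0 < y 0 * (1 - u) := by nlinarith
    have hd0 : 0 < c * (1 - u) := by nlinarith
    have hKt' : (1 - θ) / θ * (c * (1 - u)) * (y 0 * (1 - u)) ^ ((1 - θ) / θ) * t < 1 := by
      have hA : (y 0 * (1 - u)) ^ ((1 - θ) / θ) ≤ (y 0) ^ ((1 - θ) / θ) :=
        Real.rpow_le_rpow hb0.le (by nlinarith) hq.le
      have hApos : 0 < (y 0 * (1 - u)) ^ ((1 - θ) / θ) := Real.rpow_pos_of_pos hb0 _
      have step : (1 - θ) / θ * (c * (1 - u)) * (y 0 * (1 - u)) ^ ((1 - θ) / θ)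
          ≤ (1 - θ) / θ * c * (y 0) ^ ((1 - θ) / θ) := by
        apply mul_le_mul _ hA hApos.le (by positivity)
        apply mul_le_mul_of_nonneg_left (by nlinarith) hq.le
      have h2 : (1 - θ) / θ * (c * (1 - u)) * (y 0 * (1 - u)) ^ ((1 - θ) / θ) * t
          ≤ (1 - θ) / θ * c * (y 0) ^ ((1 - θ) / θ) * t :=
        mul_le_mul_of_nonneg_right step ht.le
      linarith
    exact aux_main c θ hc hθ0 hθ1 y t ht hct hy0 hderiv' η hη0 hmono
      (y 0 * (1 - u)) (c * (1 - u)) hb0 (by nlinarith) hd0 (by nlinarith) hKt'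
  -- limit as u → 0⁺
  have hca : ContinuousAt (fun u : ℝ => y 0 * (1 - u) *
      (1 - (1 - θ) / θ * (c * (1 - u)) * (y 0 * (1 - u)) ^ ((1 - θ) / θ) * t) ^ (-θ / (1 - θ)))
      0 := by
    have h1 : ContinuousAt (fun u : ℝ => y 0 * (1 - u)) 0 := by fun_prop
    have h2 : ContinuousAt (fun u : ℝ => (y 0 * (1 - u)) ^ ((1 - θ) / θ)) 0 := by
      apply ContinuousAt.comp (g := fun v : ℝ => v ^ ((1 - θ) / θ)) ?_ h1
      apply Real.continuousAt_rpow_const _ _ (Or.inl ?_)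
      simpa using hy0.ne'
    have h3 : ContinuousAt (fun u : ℝ =>
        1 - (1 - θ) / θ * (c * (1 - u)) * (y 0 * (1 - u)) ^ ((1 - θ) / θ) * t) 0 :=
      continuousAt_const.sub
        ((((continuousAt_const.mul (continuousAt_const.sub continuousAt_id)).const_mul
          ((1 - θ) / θ)).mul h2).mul continuousAt_const)
    refine h1.mul (h3.rpow_const (Or.inl ?_))
    have hval : 1 - (1 - θ) / θ * (c * (1 - 0)) * (y 0 * (1 - 0)) ^ ((1 - θ) / θ) * t
        = 1 - (1 - θ) / θ * c * y 0 ^ ((1 - θ) / θ) * t := by norm_num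
    rw [hval]
    exact ne_of_gt hKt
  have h5 := hca.tendsto.mono_left (nhdsWithin_le_nhds (s := Set.Ioi (0:ℝ)))
  have hF0 : y 0 * (1 - 0) *
      (1 - (1 - θ) / θ * (c * (1 - 0)) * (y 0 * (1 - 0)) ^ ((1 - θ) / θ) * t) ^ (-θ / (1 - θ))
      = y 0 * (1 - (1 - θ) / θ * c * y 0 ^ ((1 - θ) / θ) * t) ^ (-θ / (1 - θ)) := by
    norm_num
  rw [hF0] at h5
  have hev : ∀ᶠ u in nhdsWithin (0:ℝ) (Set.Ioi 0), y 0 * (1 - u) *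
      (1 - (1 - θ) / θ * (c * (1 - u)) * (y 0 * (1 - u)) ^ ((1 - θ) / θ) * t) ^ (-θ / (1 - θ))
      ≤ y t := by
    filter_upwards [Ioo_mem_nhdsGT_of_mem
      (show (0:ℝ) ∈ Set.Ico 0 1 from ⟨le_rfl, one_pos⟩)] with u hu
    exact key u hu
  exact le_of_tendsto h5 hev
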